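/- Let (d_p)_{p≥1} and (l_p)_{p≥1} be sequences of real numbers, zero for p > N, and let χ ≤ 0. Suppose that for every r ≥ 1 one has Σ_{p=1}^r ( p·d_p + l_p · p(p−1)/2 · χ ) ≤ 0. Then Σ_{p≥1} d_p ≤ −χ · Σ_{p≥1} l_p (p−1)/2. -/
import Mathlib

lemma aux_stmt3 (a : ℕ → ℝ) (h : ∀ r : ℕ, 1 ≤ r → (∑ p ∈ Finset.Icc 1 r, a p) ≤ 0) :
    ∀ N : ℕ, 1 ≤ N →
      (∑ p ∈ Finset.Icc 1 N, a p / p) ≤ (∑ p ∈ Finset.Icc 1 N, a p) / N := by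
  intro N
  induction N with
  | zero => intro h1; omega
  | succ n ih =>
    intro _
    rcases Nat.eq_zero_or_pos n with hn | hn
    · subst hn; simp
    · have h1 : (1:ℕ) ≤ n := hn
      have hIcc : Finset.Icc 1 (n+1) = insert (n+1) (Finset.Icc 1 n) := by
        rw [← Finset.insert_Icc_right_eq_Icc_add_one (by omega)]
      have hnot : (n+1) ∉ Finset.Icc 1 n := by simp
      rw [hIcc, Finset.sum_insert hnot, Finset.sum_insert hnot]
      have hSn := h n h1
      have hstep : (∑ p ∈ Finset.Icc 1 n, a p) / n ≤ (∑ p ∈ Finset.Icc 1 n, a p) / (n+1) := by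
        have hn0 : (0:ℝ) < n := by exact_mod_cast hn
        rw [div_le_div_iff₀ hn0 (by linarith)]
        nlinarith
      push_cast
      calc a (n+1) / ((n:ℝ)+1) + ∑ p ∈ Finset.Icc 1 n, a p / p
            ≤ a (n+1) / (n+1) + (∑ p ∈ Finset.Icc 1 n, a p) / n := by
              linarith [ih h1]
        _ ≤ a (n+1) / (n+1) + (∑ p ∈ Finset.Icc 1 n, a p) / (n+1) := by linarith
        _ = (a (n+1) + ∑ p ∈ Finset.Icc 1 n, a p) / ((n:ℝ)+1) := by ring

/-- the weighted-sum telescoping argument. If `(d_p)`, `(l_p)` vanish for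
`p > N`, `χ ≤ 0`, and `Σ_{p=1}^r (p·d_p + l_p·p(p−1)/2·χ) ≤ 0` for every `r ≥ 1`, then
`Σ_p d_p ≤ −χ · Σ_p l_p (p−1)/2`. -/
theorem stmt_3 (d l : ℕ → ℝ) (N : ℕ) (χ : ℝ) (hχ : χ ≤ 0)
    (hd : ∀ p, N < p → d p = 0) (hl : ∀ p, N < p → l p = 0)
    (h : ∀ r : ℕ, 1 ≤ r →
      (∑ p ∈ Finset.Icc 1 r, ((p : ℝ) * d p + l p * ((p : ℝ) * ((p : ℝ) - 1) / 2) * χ)) ≤ 0) :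
    (∑ p ∈ Finset.Icc 1 N, d p) ≤ -χ * ∑ p ∈ Finset.Icc 1 N, l p * (((p : ℝ) - 1) / 2) := by
  rcases Nat.eq_zero_or_pos N with hN | hN
  · subst hN; simp
  set a : ℕ → ℝ := fun p => (p : ℝ) * d p + l p * ((p : ℝ) * ((p : ℝ) - 1) / 2) * χ with ha
  have key := aux_stmt3 a h N hN
  have hSN := h N hN
  have h2 : (∑ p ∈ Finset.Icc 1 N, a p) / N ≤ 0 :=
    div_nonpos_of_nonpos_of_nonneg hSN (by positivity)
  have h3 : (∑ p ∈ Finset.Icc 1 N, a p / p)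
      = (∑ p ∈ Finset.Icc 1 N, d p) + χ * ∑ p ∈ Finset.Icc 1 N, l p * (((p : ℝ) - 1) / 2) := by
    rw [Finset.mul_sum, ← Finset.sum_add_distrib]
    apply Finset.sum_congr rfl
    intro p hp
    have hp1 : 1 ≤ p := (Finset.mem_Icc.mp hp).1
    have hp0 : (p : ℝ) ≠ 0 := by positivity
    field_simp [ha]
    ring
  linarith
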